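/- Let Σ be a symmetric p×p matrix and fix i ∈ {1,...,p}. Then sup{x ∈ ℝ : Σ − x eᵢ eᵢ' ⪰ 0} = inf{m' Σ m : m ∈ ℝ^p, mᵢ = 1}, whenever the supremum is finite and Σ is PSD. -/

import Mathlib

open Matrix

lemma quad_std {p : ℕ} (i : Fin p) (x : ℝ) (m : Fin p → ℝ) :
    m ⬝ᵥ (Matrix.single i i x *ᵥ m) = x * (m i * m i) := by
  simp [dotProduct, mulVec, single, Finset.mul_sum, Finset.sum_ite_eq, ite_and]
  ring_nf

lemma quad_sub {p : ℕ} (Sig : Matrix (Fin p) (Fin p) ℝ) (i : Fin p) (x : ℝ) (m : Fin p → ℝ) :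
    m ⬝ᵥ ((Sig - Matrix.single i i x) *ᵥ m)
      = m ⬝ᵥ (Sig *ᵥ m) - x * (m i * m i) := by
  rw [sub_mulVec, dotProduct_sub, quad_std]

/-- For a PSD symmetric `Σ` and index `i`, whenever the supremum is finite,
`sup{x : Σ - x eᵢeᵢᵀ ⪰ 0} = inf{mᵀ Σ m : m ∈ ℝ^p, mᵢ = 1}`. -/
theorem diag_perturbation_dual {p : ℕ} (Sig : Matrix (Fin p) (Fin p) ℝ)
    (hSig : Sig.PosSemidef) (i : Fin p)
    (hbdd : BddAbove {x : ℝ | (Sig - Matrix.single i i x).PosSemidef}) :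
    sSup {x : ℝ | (Sig - Matrix.single i i x).PosSemidef} =
      sInf {v : ℝ | ∃ m : Fin p → ℝ, m i = 1 ∧ v = m ⬝ᵥ (Sig *ᵥ m)} := by
  set S := {x : ℝ | (Sig - Matrix.single i i x).PosSemidef}
  set T := {v : ℝ | ∃ m : Fin p → ℝ, m i = 1 ∧ v = m ⬝ᵥ (Sig *ᵥ m)}
  have hquad : ∀ m : Fin p → ℝ, 0 ≤ m ⬝ᵥ (Sig *ᵥ m) := fun m => by
    simpa using hSig.dotProduct_mulVec_nonneg m
  have hS0 : (0 : ℝ) ∈ S := by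
    simpa [S, Matrix.single_zero] using hSig
  have hTne : T.Nonempty := ⟨_, fun j => if j = i then 1 else 0, by simp, rfl⟩
  have hTbdd : BddBelow T := ⟨0, fun v hv => by
    obtain ⟨m, _, rfl⟩ := hv; exact hquad m⟩
  -- every element of S is ≤ every element of T
  have key : ∀ x ∈ S, ∀ v ∈ T, x ≤ v := by
    intro x hx v hv
    obtain ⟨m, hm1, rfl⟩ := hv
    have := hx.dotProduct_mulVec_nonneg m
    simp only [star_trivial, quad_sub, hm1, mul_one] at this
    linarith
  apply le_antisymm
  · exact csSup_le ⟨0, hS0⟩ fun x hx => le_csInf hTne (key x hx)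
  · -- show sInf T ∈ S
    refine le_csSup hbdd ?_
    have hInfnn : 0 ≤ sInf T := le_csInf hTne fun v hv => by
      obtain ⟨m, _, rfl⟩ := hv; exact hquad m
    have hherm : (Matrix.single i i (sInf T)).IsHermitian := by
      ext a b
      simp [Matrix.IsHermitian, conjTranspose, Matrix.single, and_comm]
    refine .of_dotProduct_mulVec_nonneg (hSig.1.sub hherm) fun m => ?_
    · simp only [star_trivial, quad_sub]
      rcases eq_or_ne (m i) 0 with h0 | h0
      · simpa [h0] using hquad m
      · have hmem : ((m i)⁻¹ • m) ⬝ᵥ (Sig *ᵥ ((m i)⁻¹ • m)) ∈ T :=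
          ⟨(m i)⁻¹ • m, by simp [h0], rfl⟩
        have hle := csInf_le hTbdd hmem
        have hval : ((m i)⁻¹ • m) ⬝ᵥ (Sig *ᵥ ((m i)⁻¹ • m))
            = (m i)⁻¹ * ((m i)⁻¹ * (m ⬝ᵥ (Sig *ᵥ m))) := by
          rw [mulVec_smul, dotProduct_smul, smul_dotProduct]
          simp [smul_eq_mul]
        rw [hval] at hle
        have h2 : 0 < m i * m i := mul_self_pos.2 h0
        have hq : (m i * m i) * ((m i)⁻¹ * ((m i)⁻¹ * (m ⬝ᵥ (Sig *ᵥ m)))) = m ⬝ᵥ (Sig *ᵥ m) := by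
          field_simp
        have := mul_le_mul_of_nonneg_left hle h2.le
        rw [hq] at this
        linarith
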